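/- On the reductive complement 𝔪 in 𝔰𝔬(l) = 𝔰𝔬(n) ⊕ 𝔪 of the Stiefel manifold V_{l,2} = SO(l)/SO(n), with the invariant metric making the canonical basis of 𝔪 orthonormal, the torsion 3-form of the characteristic contact connection satisfies μ∧dμ(X,Y,Z) = −⟨[X,Y],Z⟩ for all X, Y, Z ∈ 𝔪. -/
import Mathlib


noncomputable section

open Matrix

/-!
The Stiefel manifold `V_{l,2} = SO(l)/SO(n)`, `l = n + 2`, is the unit tangent
sphere bundle of the round sphere `S^{l−1}` of curvature `1`, with the Sasaki
metric.  Write `𝔰𝔬(l) = 𝔥 ⊕ 𝔪` with `𝔥 = 𝔰𝔬(n)` embedded in the top-left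
block and `𝔪` its reductive complement of matrices vanishing on the `𝔥`
block.  With `E_{ij} = D_{ij} − D_{ji}`, the vectors `e₀ = E_{m,l}`,
`e_i = E_{i,l}`, `e_{i+n} = E_{i,m}` (`1 ≤ i ≤ n`, `m = l − 1`) form a basis
of `𝔪`, orthonormal for the invariant metric `⟨A,B⟩ = ½tr(AᵀB)`, which
corresponds to the Sasaki metric; `μ = e⁰` is the canonical contact-type
1-form of the tangent sphere bundle and `dμ = Σ_{i=1}^n e^{i+n} ∧ e^i`.
-/

/-- the reductive complement `𝔪` of `𝔰𝔬(n)` in `𝔰𝔬(l)`, `l = n+2`: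
skew-symmetric matrices vanishing on the top-left `n×n` block -/
def stiefelM (n : ℕ) : Set (Matrix (Fin (n+2)) (Fin (n+2)) ℝ) :=
  {A | Aᵀ = -A ∧ ∀ i j : Fin (n+2), (i : ℕ) < n → (j : ℕ) < n → A i j = 0}

/-- the invariant inner product on `𝔰𝔬(l)` making the canonical basis
`E_{ij}` (`i < j`) orthonormal -/
def stiefelInner (n : ℕ) (A B : Matrix (Fin (n+2)) (Fin (n+2)) ℝ) : ℝ :=
  (1/2) * Matrix.trace (Aᵀ * B)

/-- the canonical 1-form `μ = e⁰` in the invariant frame: the coefficient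
along `e₀ = E_{m,l}` -/
def stiefelMu (n : ℕ) (A : Matrix (Fin (n+2)) (Fin (n+2)) ℝ) : ℝ :=
  A ⟨n, by omega⟩ ⟨n + 1, by omega⟩

/-- the 2-form `dμ = Σ_{i=1}^n e^{i+n} ∧ e^i` in the invariant frame -/
def stiefelDmu (n : ℕ) (A B : Matrix (Fin (n+2)) (Fin (n+2)) ℝ) : ℝ :=
  ∑ i : Fin n,
    (A (Fin.castLE (by omega) i) ⟨n, by omega⟩
        * B (Fin.castLE (by omega) i) ⟨n + 1, by omega⟩
      - B (Fin.castLE (by omega) i) ⟨n, by omega⟩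
        * A (Fin.castLE (by omega) i) ⟨n + 1, by omega⟩)

/-- the torsion 3-form `μ ∧ dμ` of the characteristic contact connection,
evaluated on a triple of tangent vectors -/
def stiefelMuDmu (n : ℕ) (A B C : Matrix (Fin (n+2)) (Fin (n+2)) ℝ) : ℝ :=
  stiefelMu n A * stiefelDmu n B C - stiefelMu n B * stiefelDmu n A C
    + stiefelMu n C * stiefelDmu n A B


private lemma finSplit {n : ℕ} (f : Fin (n+2) → ℝ) :
    ∑ i, f i = (∑ i : Fin n, f (Fin.castLE (by omega) i)) + f ⟨n, by omega⟩ + f ⟨n+1, by omega⟩ := by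
  rw [Fin.sum_univ_castSucc, Fin.sum_univ_castSucc]; rfl

private lemma entryFacts {n : ℕ} {A : Matrix (Fin (n+2)) (Fin (n+2)) ℝ} (hA : A ∈ stiefelM n) :
    (∀ i j : Fin n, A (Fin.castLE (by omega) i) (Fin.castLE (by omega) j) = 0)
    ∧ A ⟨n, by omega⟩ ⟨n, by omega⟩ = 0
    ∧ A ⟨n+1, by omega⟩ ⟨n+1, by omega⟩ = 0
    ∧ (∀ i : Fin n, A ⟨n, by omega⟩ (Fin.castLE (by omega) i) = - A (Fin.castLE (by omega) i) ⟨n, by omega⟩)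
    ∧ (∀ i : Fin n, A ⟨n+1, by omega⟩ (Fin.castLE (by omega) i) = - A (Fin.castLE (by omega) i) ⟨n+1, by omega⟩)
    ∧ A ⟨n+1, by omega⟩ ⟨n, by omega⟩ = - A ⟨n, by omega⟩ ⟨n+1, by omega⟩ := by
  obtain ⟨h1, h2⟩ := hA
  have sk : ∀ i j : Fin (n+2), A i j = - A j i := fun i j => by
    have := congrFun (congrFun h1 j) i
    simpa [Matrix.transpose_apply] using this
  refine ⟨fun i j => h2 _ _ (by simp) (by simp), ?_, ?_, fun i => sk _ _, fun i => sk _ _, sk _ _⟩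
  · have := sk ⟨n, by omega⟩ ⟨n, by omega⟩; linarith
  · have := sk ⟨n+1, by omega⟩ ⟨n+1, by omega⟩; linarith

/-- On the reductive complement `𝔪` in
`𝔰𝔬(l) = 𝔰𝔬(n) ⊕ 𝔪` of the Stiefel manifold `V_{l,2} = SO(l)/SO(n)`, with the
invariant metric making the canonical basis of `𝔪` orthonormal, the torsion
3-form of the characteristic contact connection satisfies
`μ∧dμ(X,Y,Z) = −⟨[X,Y],Z⟩` for all `X, Y, Z ∈ 𝔪`. -/
theorem stiefel_mu_wedge_dmu_eq_neg_bracket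
    (n : ℕ) (hn : 0 < n)   -- so that `l = n + 2 > 2`
    (X Y Z : Matrix (Fin (n+2)) (Fin (n+2)) ℝ)
    (hX : X ∈ stiefelM n) (hY : Y ∈ stiefelM n) (hZ : Z ∈ stiefelM n) :
    stiefelMuDmu n X Y Z = - stiefelInner n (X * Y - Y * X) Z := by
  obtain ⟨zX, dXm, dXl, sXm, sXl, sX⟩ := entryFacts hX
  obtain ⟨zY, dYm, dYl, sYm, sYl, sY⟩ := entryFacts hY
  obtain ⟨zZ, dZm, dZl, sZm, sZl, sZ⟩ := entryFacts hZ
  simp only [stiefelMuDmu, stiefelMu, stiefelDmu, stiefelInner, Matrix.trace, Matrix.diag,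
    Matrix.mul_apply, Matrix.sub_apply, Matrix.transpose_apply]
  simp only [finSplit]
  simp only [zX, zY, zZ, dXm, dXl, dYm, dYl, dZm, dZl, sXm, sXl, sX, sYm, sYl, sY, sZm, sZl, sZ,
    mul_zero, zero_mul, add_zero, zero_add, sub_zero, zero_sub, neg_neg, mul_neg, neg_mul,
    Finset.sum_const_zero]
  generalize (Finset.univ : Finset (Fin n)) = s
  induction s using Finset.cons_induction with
  | empty => simp
  | cons a s ha ih =>
    simp only [Finset.sum_cons]
    linear_combination ih

end
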